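/- Let (Ω, ℱ, ℙ) be a probability space with a filtration (ℱ_k)_{k∈ℕ}, let η' ∈ [0,1), C_L ≥ 0, η > 0 and C_J ∈ ℝ be constants, and let (V_k)_{k∈ℕ} be nonnegative random variables with V_k ℱ_k-measurable, V₀ almost surely equal to a constant v₀ ≥ 0, and E[exp(V_k) | ℱ_{k−1}] ≤ exp(η' V_{k−1} + C_L) almost surely for every k ≥ 1. Let (X_k)_{k≥1} be nonnegative random variables such that X_k is ℱ_k-measurable and, for every real q ≥ 1 and every k ≥ 1, E[X_k^q | ℱ_{k−1}] ≤ exp(qη V_{k−1} + q C_J) almost surely. Set κ = η/(1−η') and C_T = C_J + κ C_L. Then for every p ≥ 0 with pκ < 1 and every n ≥ 1, E[(∏_{k=1}^n X_k)^p] ≤ exp(pκ v₀ + p C_T n). -/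

import Mathlib

open MeasureTheory
open scoped ENNReal

open MeasureTheory Filter

namespace Stmt6Aux

variable {Ω : Type*} {m m0 : MeasurableSpace Ω} {μ : Measure Ω} [IsProbabilityMeasure μ]

lemma int_of_bdd {f : Ω → ℝ} (hf : AEStronglyMeasurable f μ) {C : ℝ}
    (h : ∀ ω, ‖f ω‖ ≤ C) : Integrable f μ :=
  Integrable.mono' (integrable_const C) hf (Filter.Eventually.of_forall h)

lemma rpow_le_one_add_self {x c : ℝ} (hx : 0 ≤ x) (hc0 : 0 ≤ c) (hc1 : c ≤ 1) :
    x ^ c ≤ 1 + x := by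
  rcases le_total x 1 with h | h
  · have := Real.rpow_le_one hx h hc0
    linarith
  · have : x ^ c ≤ x ^ (1:ℝ) := Real.rpow_le_rpow_of_exponent_le h hc1
    rw [Real.rpow_one] at this
    linarith

/-- Conditional Hölder inequality with an `ε`-fudge, for a bounded first factor. -/
lemma condexp_mul_le_eps (hm : m ≤ m0) {f g : Ω → ℝ}
    (hfm : Measurable f) (hgm : Measurable g)
    (hf0 : ∀ ω, 0 ≤ f ω) (hg0 : ∀ ω, 0 ≤ g ω)
    {M : ℝ} (hM : 0 ≤ M) (hfM : ∀ ω, f ω ≤ M)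
    {r s : ℝ} (hrs : Real.HolderConjugate r s)
    (hgs : Integrable (fun ω => g ω ^ s) μ) {ε : ℝ} (hε : 0 < ε) :
    μ[fun ω => f ω * g ω|m] ≤ᵐ[μ]
      fun ω => (max ((μ[fun ω' => f ω' ^ r|m]) ω) 0 + ε) ^ (1/r) *
               (max ((μ[fun ω' => g ω' ^ s|m]) ω) 0 + ε) ^ (1/s) := by
  have hr0 : (0:ℝ) < r := hrs.pos
  have hs0 : (0:ℝ) < s := hrs.symm.pos
  have hr1 : (1:ℝ) ≤ r := (Real.holderConjugate_iff.mp hrs).1.le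
  have hs1 : (1:ℝ) ≤ s := (Real.holderConjugate_iff.mp hrs.symm).1.le
  set F : Ω → ℝ := fun ω => f ω ^ r with hFdef
  set G : Ω → ℝ := fun ω => g ω ^ s with hGdef
  set A : Ω → ℝ := fun ω => max ((μ[F|m]) ω) 0 + ε with hAdef
  set B : Ω → ℝ := fun ω => max ((μ[G|m]) ω) 0 + ε with hBdef
  have hF0 : ∀ ω, 0 ≤ F ω := fun ω => Real.rpow_nonneg (hf0 ω) r
  have hG0 : ∀ ω, 0 ≤ G ω := fun ω => Real.rpow_nonneg (hg0 ω) s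
  have hAε : ∀ ω, ε ≤ A ω := fun ω => le_add_of_nonneg_left (le_max_right _ _)
  have hBε : ∀ ω, ε ≤ B ω := fun ω => le_add_of_nonneg_left (le_max_right _ _)
  have hA0 : ∀ ω, 0 < A ω := fun ω => hε.trans_le (hAε ω)
  have hB0 : ∀ ω, 0 < B ω := fun ω => hε.trans_le (hBε ω)
  have hAm : StronglyMeasurable[m] A :=
    ((stronglyMeasurable_condExp.measurable.max measurable_const).add
      measurable_const).stronglyMeasurable
  have hBm : StronglyMeasurable[m] B :=
    ((stronglyMeasurable_condExp.measurable.max measurable_const).add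
      measurable_const).stronglyMeasurable
  set φ : Ω → ℝ := fun ω => A ω ^ (1/r - 1) * B ω ^ (1/s) / r with hφdef
  set ψ : Ω → ℝ := fun ω => A ω ^ (1/r) * B ω ^ (1/s - 1) / s with hψdef
  have hφm : StronglyMeasurable[m] φ :=
    Measurable.stronglyMeasurable
      (((hAm.measurable.pow measurable_const).mul (hBm.measurable.pow measurable_const)).div
        measurable_const)
  have hψm : StronglyMeasurable[m] ψ :=
    Measurable.stronglyMeasurable
      (((hAm.measurable.pow measurable_const).mul (hBm.measurable.pow measurable_const)).div
        measurable_const)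
  have hφ0 : ∀ ω, 0 ≤ φ ω := fun ω => by
    have h1 : (0:ℝ) ≤ A ω ^ (1/r - 1) := Real.rpow_nonneg (hA0 ω).le _
    have h2 : (0:ℝ) ≤ B ω ^ (1/s) := Real.rpow_nonneg (hB0 ω).le _
    positivity
  have hψ0 : ∀ ω, 0 ≤ ψ ω := fun ω => by
    have h1 : (0:ℝ) ≤ A ω ^ (1/r) := Real.rpow_nonneg (hA0 ω).le _
    have h2 : (0:ℝ) ≤ B ω ^ (1/s - 1) := Real.rpow_nonneg (hB0 ω).le _
    positivity
  -- integrability facts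
  have hFint : Integrable F μ := by
    refine int_of_bdd ((hfm.pow measurable_const).aestronglyMeasurable) (C := M ^ r) fun ω => ?_
    rw [Real.norm_eq_abs, abs_of_nonneg (hF0 ω)]
    exact Real.rpow_le_rpow (hf0 ω) (hfM ω) hr0.le
  have hg_int : Integrable g μ := by
    refine Integrable.mono' (g := fun ω => 1 + G ω) ((integrable_const 1).add hgs)
      hgm.aestronglyMeasurable (Filter.Eventually.of_forall fun ω => ?_)
    rw [Real.norm_eq_abs, abs_of_nonneg (hg0 ω)]
    show g ω ≤ 1 + G ω
    rcases le_total (g ω) 1 with h | h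
    · have : (0:ℝ) ≤ G ω := hG0 ω
      linarith
    · have h2 : g ω ^ (1:ℝ) ≤ g ω ^ s := Real.rpow_le_rpow_of_exponent_le h hs1
      rw [Real.rpow_one] at h2
      have : (g ω : ℝ) ^ s = G ω := rfl
      linarith
  have hfg_int : Integrable (fun ω => f ω * g ω) μ := by
    refine Integrable.mono' (g := fun ω => M * g ω) (hg_int.const_mul M)
      ((hfm.mul hgm).aestronglyMeasurable) (Filter.Eventually.of_forall fun ω => ?_)
    rw [Real.norm_eq_abs, abs_of_nonneg (mul_nonneg (hf0 ω) (hg0 ω))]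
    exact mul_le_mul_of_nonneg_right (hfM ω) (hg0 ω)
  have hAub : ∀ᵐ ω ∂μ, A ω ≤ M ^ r + ε := by
    have h1 : μ[F|m] ≤ᵐ[μ] μ[(fun _ => M ^ r : Ω → ℝ)|m] :=
      condExp_mono hFint (integrable_const _)
        (Filter.Eventually.of_forall fun ω => Real.rpow_le_rpow (hf0 ω) (hfM ω) hr0.le)
    rw [condExp_const hm] at h1
    filter_upwards [h1] with ω h1
    have : max ((μ[F|m]) ω) 0 ≤ M ^ r := max_le h1 (Real.rpow_nonneg hM r)
    simpa [hAdef] using add_le_add_right this ε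
  have hBint : Integrable B μ := by
    refine Integrable.mono' (g := fun ω => |(μ[G|m]) ω| + ε)
      (integrable_condExp.abs.add (integrable_const ε))
      ((hBm.mono hm).aestronglyMeasurable) (Filter.Eventually.of_forall fun ω => ?_)
    rw [Real.norm_eq_abs, abs_of_nonneg (hB0 ω).le]
    have : max ((μ[G|m]) ω) 0 ≤ |(μ[G|m]) ω| := max_le (le_abs_self _) (abs_nonneg _)
    simpa [hBdef] using add_le_add_right this ε
  have hφF_int : Integrable (fun ω => φ ω * F ω) μ := by
    refine Integrable.mono' (g := fun ω => (ε ^ (1/r - 1) * M ^ r / r) * (1 + B ω))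
      ((((integrable_const 1).add hBint).const_mul _))
      ((((hAm.mono hm).measurable.pow measurable_const).mul
          ((hBm.mono hm).measurable.pow measurable_const)).div measurable_const |>.mul
        (hfm.pow measurable_const) |>.aestronglyMeasurable)
      (Filter.Eventually.of_forall fun ω => ?_)
    rw [Real.norm_eq_abs, abs_of_nonneg (mul_nonneg (hφ0 ω) (hF0 ω))]
    have e1 : A ω ^ (1/r - 1) ≤ ε ^ (1/r - 1) := by
      refine Real.rpow_le_rpow_of_nonpos hε (hAε ω) ?_
      have : 1/r ≤ 1 := by
        rw [div_le_one hr0]; exact hr1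
      linarith
    have e2 : B ω ^ (1/s) ≤ 1 + B ω :=
      rpow_le_one_add_self (hB0 ω).le (by positivity) (by rw [div_le_one hs0]; exact hs1)
    have e3 : F ω ≤ M ^ r := Real.rpow_le_rpow (hf0 ω) (hfM ω) hr0.le
    have h1 : (0:ℝ) ≤ ε ^ (1/r - 1) := Real.rpow_nonneg hε.le _
    have h2 : (0:ℝ) ≤ B ω ^ (1/s) := Real.rpow_nonneg (hB0 ω).le _
    have h3 : (0:ℝ) ≤ A ω ^ (1/r - 1) := Real.rpow_nonneg (hA0 ω).le _
    calc φ ω * F ω = (A ω ^ (1/r - 1)) * (B ω ^ (1/s)) * F ω / r := by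
          simp only [hφdef]; ring
      _ ≤ (ε ^ (1/r - 1)) * (1 + B ω) * (M ^ r) / r := by
          have hfac : A ω ^ (1/r - 1) * B ω ^ (1/s) ≤ ε ^ (1/r - 1) * (1 + B ω) :=
            mul_le_mul e1 e2 h2 h1
          have hmain : A ω ^ (1/r - 1) * B ω ^ (1/s) * F ω
              ≤ ε ^ (1/r - 1) * (1 + B ω) * (M ^ r) :=
            mul_le_mul hfac e3 (hF0 ω) (mul_nonneg h1 (by linarith [hB0 ω]))
          exact (div_le_div_iff_of_pos_right hr0).mpr hmain
      _ = (ε ^ (1/r - 1) * M ^ r / r) * (1 + B ω) := by ring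
  have hψG_int : Integrable (fun ω => ψ ω * G ω) μ := by
    refine Integrable.mono' (g := fun ω => ((M ^ r + ε) ^ (1/r) * ε ^ (1/s - 1) / s) * G ω)
      (hgs.const_mul _)
      ((((hAm.mono hm).measurable.pow measurable_const).mul
          ((hBm.mono hm).measurable.pow measurable_const)).div measurable_const |>.mul
        (hgm.pow measurable_const) |>.aestronglyMeasurable)
      ?_
    filter_upwards [hAub] with ω hA_ub
    rw [Real.norm_eq_abs, abs_of_nonneg (mul_nonneg (hψ0 ω) (hG0 ω))]
    have e1 : A ω ^ (1/r) ≤ (M ^ r + ε) ^ (1/r) :=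
      Real.rpow_le_rpow (hA0 ω).le hA_ub (by positivity)
    have e2 : B ω ^ (1/s - 1) ≤ ε ^ (1/s - 1) := by
      refine Real.rpow_le_rpow_of_nonpos hε (hBε ω) ?_
      have : 1/s ≤ 1 := by rw [div_le_one hs0]; exact hs1
      linarith
    have h1 : (0:ℝ) ≤ A ω ^ (1/r) := Real.rpow_nonneg (hA0 ω).le _
    have h2 : (0:ℝ) ≤ ε ^ (1/s - 1) := Real.rpow_nonneg hε.le _
    have h3 : (0:ℝ) ≤ B ω ^ (1/s - 1) := Real.rpow_nonneg (hB0 ω).le _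
    calc ψ ω * G ω = (A ω ^ (1/r)) * (B ω ^ (1/s - 1)) * G ω / s := by
          simp only [hψdef]; ring
      _ ≤ ((M ^ r + ε) ^ (1/r)) * (ε ^ (1/s - 1)) * G ω / s := by
          have hfac : A ω ^ (1/r) * B ω ^ (1/s - 1) ≤ (M ^ r + ε) ^ (1/r) * ε ^ (1/s - 1) :=
            mul_le_mul e1 e2 h3 (Real.rpow_nonneg (by positivity) _)
          have hmain : A ω ^ (1/r) * B ω ^ (1/s - 1) * G ω
              ≤ (M ^ r + ε) ^ (1/r) * ε ^ (1/s - 1) * G ω :=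
            mul_le_mul_of_nonneg_right hfac (hG0 ω)
          exact (div_le_div_iff_of_pos_right hs0).mpr hmain
      _ = ((M ^ r + ε) ^ (1/r) * ε ^ (1/s - 1) / s) * G ω := by ring
  -- the pointwise Young inequality
  have hkey : ∀ ω, f ω * g ω ≤ φ ω * F ω + ψ ω * G ω := by
    intro ω
    have hu : (0:ℝ) < A ω ^ (1/r) := Real.rpow_pos_of_pos (hA0 ω) _
    have hv : (0:ℝ) < B ω ^ (1/s) := Real.rpow_pos_of_pos (hB0 ω) _
    have hY := Real.young_inequality_of_nonneg
      (div_nonneg (hf0 ω) hu.le) (div_nonneg (hg0 ω) hv.le) hrs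
    have e1 : (f ω / A ω ^ (1/r)) ^ r = F ω / A ω := by
      rw [Real.div_rpow (hf0 ω) (Real.rpow_nonneg (hA0 ω).le _),
        ← Real.rpow_mul (hA0 ω).le, one_div, inv_mul_cancel₀ hrs.ne_zero, Real.rpow_one]
    have e2 : (g ω / B ω ^ (1/s)) ^ s = G ω / B ω := by
      rw [Real.div_rpow (hg0 ω) (Real.rpow_nonneg (hB0 ω).le _),
        ← Real.rpow_mul (hB0 ω).le, one_div, inv_mul_cancel₀ hrs.symm.ne_zero, Real.rpow_one]
    rw [e1, e2] at hY
    have e3 : A ω ^ (1/r - 1) = A ω ^ (1/r) / A ω := by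
      rw [Real.rpow_sub (hA0 ω), Real.rpow_one]
    have e4 : B ω ^ (1/s - 1) = B ω ^ (1/s) / B ω := by
      rw [Real.rpow_sub (hB0 ω), Real.rpow_one]
    have hmul := mul_le_mul_of_nonneg_left hY (mul_nonneg hu.le hv.le)
    calc f ω * g ω
        = (A ω ^ (1/r) * B ω ^ (1/s)) * (f ω / A ω ^ (1/r) * (g ω / B ω ^ (1/s))) := by
          field_simp
      _ ≤ (A ω ^ (1/r) * B ω ^ (1/s)) * (F ω / A ω / r + G ω / B ω / s) := hmul
      _ = φ ω * F ω + ψ ω * G ω := by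
          simp only [hφdef, hψdef, e3, e4]
          field_simp
  -- condexp manipulations
  have h1 : μ[fun ω => f ω * g ω|m] ≤ᵐ[μ] μ[fun ω => φ ω * F ω + ψ ω * G ω|m] :=
    condExp_mono hfg_int (hφF_int.add hψG_int) (Filter.Eventually.of_forall hkey)
  have h2 : μ[fun ω => φ ω * F ω + ψ ω * G ω|m]
      =ᵐ[μ] μ[fun ω => φ ω * F ω|m] + μ[fun ω => ψ ω * G ω|m] :=
    condExp_add hφF_int hψG_int m
  have h3 : μ[fun ω => φ ω * F ω|m] =ᵐ[μ] φ * μ[F|m] :=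
    condExp_mul_of_stronglyMeasurable_left hφm hφF_int hFint
  have h4 : μ[fun ω => ψ ω * G ω|m] =ᵐ[μ] ψ * μ[G|m] :=
    condExp_mul_of_stronglyMeasurable_left hψm hψG_int hgs
  have h5 : ∀ ω, (μ[F|m]) ω ≤ A ω :=
    fun ω => (le_max_left _ _).trans (le_add_of_nonneg_right hε.le)
  have h6 : ∀ ω, (μ[G|m]) ω ≤ B ω :=
    fun ω => (le_max_left _ _).trans (le_add_of_nonneg_right hε.le)
  refine h1.trans ?_
  filter_upwards [h2, h3, h4] with ω H2 H3 H4
  show _ ≤ A ω ^ (1/r) * B ω ^ (1/s)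
  rw [H2, Pi.add_apply, H3, H4, Pi.mul_apply, Pi.mul_apply]
  have e3 : A ω ^ (1/r - 1) * A ω = A ω ^ (1/r) := by
    rw [Real.rpow_sub (hA0 ω), Real.rpow_one]
    exact div_mul_cancel₀ _ (hA0 ω).ne'
  have e4 : B ω ^ (1/s - 1) * B ω = B ω ^ (1/s) := by
    rw [Real.rpow_sub (hB0 ω), Real.rpow_one]
    exact div_mul_cancel₀ _ (hB0 ω).ne'
  calc φ ω * (μ[F|m]) ω + ψ ω * (μ[G|m]) ω
      ≤ φ ω * A ω + ψ ω * B ω :=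
        add_le_add (mul_le_mul_of_nonneg_left (h5 ω) (hφ0 ω))
          (mul_le_mul_of_nonneg_left (h6 ω) (hψ0 ω))
    _ = (A ω ^ (1/r) * B ω ^ (1/s)) * (1/r) + (A ω ^ (1/r) * B ω ^ (1/s)) * (1/s) := by
        simp only [hφdef, hψdef]
        rw [← e3, ← e4]
        ring
    _ = A ω ^ (1/r) * B ω ^ (1/s) := by
        rw [← mul_add, one_div, one_div, hrs.inv_add_inv_eq_one, mul_one]

end Stmt6Aux

/-- Proposition 6.2 (abstract form): under the Lyapunov recursion
`E[exp(V_k) | ℱ_{k-1}] ≤ exp(η' V_{k-1} + C_L)` and the moment bounds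
`E[X_k^q | ℱ_{k-1}] ≤ exp(qη V_{k-1} + q C_J)` for all `q ≥ 1`, one has, for every `p ≥ 0`
with `pκ < 1` (where `κ = η/(1-η')` and `C_T = C_J + κ C_L`),
`E[(∏_{k=1}^n X_k)^p] ≤ exp(pκ v₀ + p C_T n)`. -/
theorem stmt6 {Ω : Type*} {m0 : MeasurableSpace Ω} (ℙ : Measure Ω) [IsProbabilityMeasure ℙ]
    (ℱ : Filtration ℕ m0)
    {η' C_L η C_J : ℝ} (hη' : η' ∈ Set.Ico (0:ℝ) 1) (hCL : 0 ≤ C_L) (hη : 0 < η)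
    (V : ℕ → Ω → ℝ) (hV_nonneg : ∀ k ω, 0 ≤ V k ω)
    (hV_adapted : ∀ k, StronglyMeasurable[ℱ k] (V k))
    {v₀ : ℝ} (hv₀ : 0 ≤ v₀) (hV0 : ∀ᵐ ω ∂ℙ, V 0 ω = v₀)
    (hV_int : ∀ k, Integrable (fun ω => Real.exp (V k ω)) ℙ)
    (hV_rec : ∀ k : ℕ, 1 ≤ k → ∀ᵐ ω ∂ℙ,
      (ℙ[fun ω' => Real.exp (V k ω') | ℱ (k - 1)]) ω ≤ Real.exp (η' * V (k - 1) ω + C_L))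
    (X : ℕ → Ω → ℝ) (hX_nonneg : ∀ k ω, 0 ≤ X k ω)
    (hX_adapted : ∀ k, StronglyMeasurable[ℱ k] (X k))
    (hX_int : ∀ q : ℝ, 1 ≤ q → ∀ k : ℕ, 1 ≤ k → Integrable (fun ω => X k ω ^ q) ℙ)
    (hX_rec : ∀ q : ℝ, 1 ≤ q → ∀ k : ℕ, 1 ≤ k → ∀ᵐ ω ∂ℙ,
      (ℙ[fun ω' => X k ω' ^ q | ℱ (k - 1)]) ω ≤ Real.exp (q * η * V (k - 1) ω + q * C_J)) :
    ∀ p : ℝ, 0 ≤ p → p * (η / (1 - η')) < 1 → ∀ n : ℕ, 1 ≤ n →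
      ∫⁻ ω, ENNReal.ofReal ((∏ k ∈ Finset.Icc 1 n, X k ω) ^ p) ∂ℙ ≤
        ENNReal.ofReal
          (Real.exp (p * (η / (1 - η')) * v₀ + p * (C_J + (η / (1 - η')) * C_L) * n)) := by
  intro p hp hpκ n hn
  obtain ⟨hη'0, hη'1⟩ := hη'
  have h1η' : (0:ℝ) < 1 - η' := by linarith
  set κ : ℝ := η / (1 - η') with hκdef
  have hκ0 : 0 < κ := div_pos hη h1η'
  set C_T : ℝ := C_J + κ * C_L with hCTdef
  have hXm : ∀ k, Measurable (X k) := fun k => ((hX_adapted k).mono (ℱ.le k)).measurable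
  rcases hp.eq_or_lt with hp0 | hp0
  · rw [← hp0]
    simp [Real.rpow_zero, lintegral_const, measure_univ]
  set θ : ℝ := p * κ with hθdef
  have hθ0 : 0 < θ := mul_pos hp0 hκ0
  have hθ1 : θ < 1 := hpκ
  have h1θ : (0:ℝ) < 1 - θ := by linarith
  set q : ℝ := p / (1 - θ) with hqdef
  have hq0 : 0 < q := div_pos hp0 h1θ
  have hκη : κ * (1 - η') = η := div_mul_cancel₀ _ h1η'.ne'
  have hθη : p * η + θ * η' = θ := by
    have h : θ * (1 - η') = p * η := by rw [hθdef, mul_assoc, hκη]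
    nlinarith [h]
  have hq1θ : q * (1 - θ) = p := div_mul_cancel₀ _ h1θ.ne'
  have hval : ∀ v : ℝ,
      Real.exp (q * η * v + q * C_J) ^ (1 - θ) * Real.exp (η' * v + C_L) ^ θ
        = Real.exp (θ * v + p * C_T) := by
    intro v
    rw [← Real.exp_mul, ← Real.exp_mul, ← Real.exp_add]
    congr 1
    rw [hCTdef]
    linear_combination (η * v + C_J) * hq1θ + v * hθη + C_L * hθdef
  suffices hbdd : ∀ M : ℕ,
      ∫⁻ ω, ENNReal.ofReal ((∏ k ∈ Finset.Icc 1 n, min (X k ω) (M:ℝ)) ^ p) ∂ℙ ≤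
        ENNReal.ofReal (Real.exp (p * κ * v₀ + p * C_T * n)) by
    have hmono : ∀ᵐ ω ∂ℙ, Monotone fun M : ℕ =>
        ENNReal.ofReal ((∏ k ∈ Finset.Icc 1 n, min (X k ω) (M:ℝ)) ^ p) := by
      refine Filter.Eventually.of_forall fun ω M M' hMM' => ?_
      apply ENNReal.ofReal_le_ofReal
      refine Real.rpow_le_rpow
        (Finset.prod_nonneg fun k _ => le_min (hX_nonneg k ω) (Nat.cast_nonneg _)) ?_ hp
      exact Finset.prod_le_prod (fun k _ => le_min (hX_nonneg k ω) (Nat.cast_nonneg _))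
        (fun k _ => min_le_min le_rfl (Nat.cast_le.mpr hMM'))
    have htend : ∀ᵐ ω ∂ℙ, Filter.Tendsto (fun M : ℕ =>
        ENNReal.ofReal ((∏ k ∈ Finset.Icc 1 n, min (X k ω) (M:ℝ)) ^ p)) Filter.atTop
        (nhds (ENNReal.ofReal ((∏ k ∈ Finset.Icc 1 n, X k ω) ^ p))) := by
      refine Filter.Eventually.of_forall fun ω => ?_
      have hev : ∀ᶠ M : ℕ in Filter.atTop,
          ENNReal.ofReal ((∏ k ∈ Finset.Icc 1 n, min (X k ω) (M:ℝ)) ^ p)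
            = ENNReal.ofReal ((∏ k ∈ Finset.Icc 1 n, X k ω) ^ p) := by
        have hall : ∀ᶠ M : ℕ in Filter.atTop, ∀ k ∈ Finset.Icc 1 n,
            min (X k ω) (M:ℝ) = X k ω := by
          rw [eventually_all_finset]
          intro k _
          refine Filter.eventually_atTop.mpr ⟨⌈X k ω⌉₊, fun M hM => min_eq_left ?_⟩
          exact (Nat.le_ceil _).trans (Nat.cast_le.mpr hM)
        filter_upwards [hall] with M hM
        rw [Finset.prod_congr rfl hM]
      exact Filter.Tendsto.congr' (hev.mono fun M h => h.symm) tendsto_const_nhds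
    have hmeas : ∀ M : ℕ, AEMeasurable (fun ω =>
        ENNReal.ofReal ((∏ k ∈ Finset.Icc 1 n, min (X k ω) (M:ℝ)) ^ p)) ℙ := fun M =>
      (((Finset.measurable_prod _ fun k _ => (hXm k).min measurable_const).pow
        measurable_const).ennreal_ofReal).aemeasurable
    have hlim := lintegral_tendsto_of_tendsto_of_monotone hmeas hmono htend
    exact le_of_tendsto hlim (Filter.Eventually.of_forall hbdd)
  intro M
  set Y : ℕ → Ω → ℝ := fun k ω => min (X k ω) (M:ℝ) with hYdef
  have hY0 : ∀ k ω, 0 ≤ Y k ω := fun k ω => le_min (hX_nonneg k ω) (Nat.cast_nonneg _)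
  have hYM : ∀ k ω, Y k ω ≤ (M:ℝ) := fun k ω => min_le_right _ _
  have hYX : ∀ k ω, Y k ω ≤ X k ω := fun k ω => min_le_left _ _
  have hYmeas : ∀ k, Measurable (Y k) := fun k => (hXm k).min measurable_const
  -- the key conditional bound
  have key : ∀ k : ℕ, 1 ≤ k →
      (ℙ[fun ω => Y k ω ^ p * Real.exp (θ * V k ω)|ℱ (k-1)]) ≤ᵐ[ℙ]
        fun ω => Real.exp (θ * V (k-1) ω + p * C_T) := by
    intro k hk
    have hm : ℱ (k-1) ≤ m0 := ℱ.le _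
    have hVm : Measurable (V k) := ((hV_adapted k).mono (ℱ.le k)).measurable
    have hgm : Measurable fun ω => Real.exp (θ * V k ω) := (hVm.const_mul θ).exp
    have hrs : Real.HolderConjugate (1/(1-θ)) (1/θ) := by
      refine Real.holderConjugate_iff.mpr ⟨?_, ?_⟩
      · rw [lt_div_iff₀ h1θ, one_mul]; linarith
      · rw [one_div, one_div, inv_inv, inv_inv]; ring
    have hgs_eq : (fun ω => (Real.exp (θ * V k ω)) ^ ((1:ℝ)/θ)) = fun ω => Real.exp (V k ω) := by
      funext ω
      rw [← Real.exp_mul, mul_one_div, mul_comm θ (V k ω), mul_div_assoc,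
        div_self hθ0.ne', mul_one]
    have hgs : Integrable (fun ω => (Real.exp (θ * V k ω)) ^ ((1:ℝ)/θ)) ℙ := by
      rw [hgs_eq]; exact hV_int k
    set E : ℕ → ℝ := fun i => 1 / (i + 1) with hEdef
    have hE0 : ∀ i, 0 < E i := fun i => by positivity
    have hE_lim : Filter.Tendsto E Filter.atTop (nhds 0) :=
      tendsto_one_div_add_atTop_nhds_zero_nat
    have hYq_int : Integrable (fun ω => Y k ω ^ q) ℙ := by
      refine Stmt6Aux.int_of_bdd (((hYmeas k).pow measurable_const).aestronglyMeasurable)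
        (C := (M:ℝ) ^ q) fun ω => ?_
      rw [Real.norm_eq_abs, abs_of_nonneg (Real.rpow_nonneg (hY0 k ω) q)]
      exact Real.rpow_le_rpow (hY0 k ω) (hYM k ω) hq0.le
    obtain ⟨D, hD_le, hD_nn, hD_lim⟩ :
        ∃ D : ℕ → Ω → ℝ,
          (∀ i, (ℙ[fun ω => Y k ω ^ q|ℱ (k-1)]) ≤ᵐ[ℙ] D i) ∧
          (∀ i ω, 0 ≤ D i ω) ∧
          (∀ ω, Filter.Tendsto (fun i => D i ω) Filter.atTop
            (nhds (Real.exp (q * η * V (k-1) ω + q * C_J)))) := by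
      rcases le_or_gt 1 q with hq1 | hq1
      · refine ⟨fun _ ω => Real.exp (q * η * V (k-1) ω + q * C_J), fun i => ?_,
          fun i ω => (Real.exp_pos _).le, fun ω => tendsto_const_nhds⟩
        have h1 : (ℙ[fun ω => Y k ω ^ q|ℱ (k-1)]) ≤ᵐ[ℙ] (ℙ[fun ω => X k ω ^ q|ℱ (k-1)]) :=
          condExp_mono hYq_int (hX_int q hq1 k hk)
            (Filter.Eventually.of_forall fun ω =>
              Real.rpow_le_rpow (hY0 k ω) (hYX k ω) hq0.le)
        exact h1.trans (hX_rec q hq1 k hk)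
      · refine ⟨fun i ω => (Real.exp (η * V (k-1) ω + C_J) + E i) ^ q * (1 + E i) ^ (1 - q),
          fun i => ?_, fun i ω => ?_, fun ω => ?_⟩
        · have hrs' : Real.HolderConjugate (1/q) (1/(1-q)) := by
            refine Real.holderConjugate_iff.mpr ⟨?_, ?_⟩
            · rw [lt_div_iff₀ hq0, one_mul]; exact hq1
            · rw [one_div, one_div, inv_inv, inv_inv]; ring
          have hh := Stmt6Aux.condexp_mul_le_eps (μ := ℙ) hm
            (f := fun ω => Y k ω ^ q) (g := fun _ => (1:ℝ))
            ((hYmeas k).pow measurable_const) measurable_const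
            (fun ω => Real.rpow_nonneg (hY0 k ω) q) (fun _ => zero_le_one)
            (M := (M:ℝ) ^ q) (Real.rpow_nonneg (Nat.cast_nonneg _) q)
            (fun ω => Real.rpow_le_rpow (hY0 k ω) (hYM k ω) hq0.le)
            hrs' (by simpa using integrable_const (1:ℝ)) (hE0 i)
          have e1 : (fun ω' => (Y k ω' ^ q) ^ ((1:ℝ)/q)) = fun ω' => Y k ω' := by
            funext ω'
            rw [← Real.rpow_mul (hY0 k ω'), mul_one_div, div_self hq0.ne', Real.rpow_one]
          have e2 : (fun _ : Ω => (1:ℝ) ^ ((1:ℝ)/(1-q))) = fun _ : Ω => (1:ℝ) := by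
            funext _; rw [Real.one_rpow]
          simp only [mul_one, one_div_one_div, e1, e2, condExp_const hm,
            max_eq_left (zero_le_one' ℝ)] at hh
          have hYint : Integrable (Y k) ℙ := by
            refine Stmt6Aux.int_of_bdd ((hYmeas k).aestronglyMeasurable) (C := (M:ℝ))
              fun ω => ?_
            rw [Real.norm_eq_abs, abs_of_nonneg (hY0 k ω)]
            exact hYM k ω
          have hXint1 : Integrable (fun ω => X k ω) ℙ :=
            (hX_int 1 le_rfl k hk).congr
              (Filter.Eventually.of_forall fun ω => Real.rpow_one _)
          have h2 : (ℙ[fun ω => Y k ω|ℱ (k-1)]) ≤ᵐ[ℙ] (ℙ[fun ω => X k ω|ℱ (k-1)]) :=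
            condExp_mono hYint hXint1 (Filter.Eventually.of_forall fun ω => hYX k ω)
          have h3 := hX_rec 1 le_rfl k hk
          simp only [Real.rpow_one, one_mul] at h3
          filter_upwards [hh, h2, h3] with ω hhω h2ω h3ω
          refine hhω.trans ?_
          have hb1 : max ((ℙ[fun ω => Y k ω|ℱ (k-1)]) ω) 0 + E i
              ≤ Real.exp (η * V (k-1) ω + C_J) + E i := by
            have : max ((ℙ[fun ω => Y k ω|ℱ (k-1)]) ω) 0 ≤ Real.exp (η * V (k-1) ω + C_J) :=
              max_le (h2ω.trans h3ω) (Real.exp_pos _).le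
            linarith
          refine mul_le_mul (Real.rpow_le_rpow (by positivity) hb1 hq0.le) le_rfl
            (Real.rpow_nonneg (by positivity) _) (Real.rpow_nonneg (by positivity) _)
        · positivity
        · have htd : Filter.Tendsto
              (fun i => (Real.exp (η * V (k-1) ω + C_J) + E i) ^ q * (1 + E i) ^ (1 - q))
              Filter.atTop
              (nhds ((Real.exp (η * V (k-1) ω + C_J) + 0) ^ q * ((1:ℝ) + 0) ^ (1 - q))) :=
            ((tendsto_const_nhds.add hE_lim).rpow_const (Or.inr hq0.le)).mul
              ((tendsto_const_nhds.add hE_lim).rpow_const (Or.inr (by linarith)))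
          have heq : (Real.exp (η * V (k-1) ω + C_J) + 0) ^ q * ((1:ℝ) + 0) ^ (1 - q)
              = Real.exp (q * η * V (k-1) ω + q * C_J) := by
            rw [add_zero, add_zero, Real.one_rpow, mul_one, ← Real.exp_mul]
            congr 1
            ring
          rw [heq] at htd
          exact htd
    have hstep : ∀ i : ℕ,
        (ℙ[fun ω => Y k ω ^ p * Real.exp (θ * V k ω)|ℱ (k-1)]) ≤ᵐ[ℙ]
          fun ω => (D i ω + E i) ^ (1 - θ) *
            (Real.exp (η' * V (k-1) ω + C_L) + E i) ^ θ := by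
      intro i
      have hh := Stmt6Aux.condexp_mul_le_eps (μ := ℙ) hm
        (f := fun ω => Y k ω ^ p) (g := fun ω => Real.exp (θ * V k ω))
        ((hYmeas k).pow measurable_const) hgm
        (fun ω => Real.rpow_nonneg (hY0 k ω) p) (fun ω => (Real.exp_pos _).le)
        (M := (M:ℝ) ^ p) (Real.rpow_nonneg (Nat.cast_nonneg _) p)
        (fun ω => Real.rpow_le_rpow (hY0 k ω) (hYM k ω) hp)
        hrs hgs (hE0 i)
      have e1 : (fun ω' => (Y k ω' ^ p) ^ ((1:ℝ)/(1-θ))) = fun ω' => Y k ω' ^ q := by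
        funext ω'
        rw [← Real.rpow_mul (hY0 k ω'), mul_one_div, ← hqdef]
      simp only [one_div_one_div, e1, hgs_eq] at hh
      filter_upwards [hh, hD_le i, hV_rec k hk] with ω h1 h2 h3
      refine h1.trans ?_
      have hb1 : max ((ℙ[fun ω => Y k ω ^ q|ℱ (k-1)]) ω) 0 + E i ≤ D i ω + E i := by
        have := max_le h2 (hD_nn i ω)
        linarith
      have hb2 : max ((ℙ[fun ω => Real.exp (V k ω)|ℱ (k-1)]) ω) 0 + E i
          ≤ Real.exp (η' * V (k-1) ω + C_L) + E i := by
        have := max_le h3 (Real.exp_pos _).le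
        linarith
      refine mul_le_mul (Real.rpow_le_rpow (by positivity) hb1 h1θ.le)
        (Real.rpow_le_rpow (by positivity) hb2 hθ0.le)
        (Real.rpow_nonneg (by positivity) _) (Real.rpow_nonneg ?_ _)
      have := hD_nn i ω
      linarith [hE0 i]
    have hae : ∀ᵐ ω ∂ℙ, ∀ i : ℕ,
        (ℙ[fun ω => Y k ω ^ p * Real.exp (θ * V k ω)|ℱ (k-1)]) ω ≤
          (D i ω + E i) ^ (1 - θ) * (Real.exp (η' * V (k-1) ω + C_L) + E i) ^ θ :=
      ae_all_iff.mpr hstep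
    filter_upwards [hae] with ω hω
    have ht1 : Filter.Tendsto (fun i => D i ω + E i) Filter.atTop
        (nhds (Real.exp (q * η * V (k-1) ω + q * C_J))) := by
      simpa using (hD_lim ω).add hE_lim
    have ht2 : Filter.Tendsto (fun i => Real.exp (η' * V (k-1) ω + C_L) + E i) Filter.atTop
        (nhds (Real.exp (η' * V (k-1) ω + C_L))) := by
      simpa using (tendsto_const_nhds (x := Real.exp (η' * V (k-1) ω + C_L))).add hE_lim
    have ht := (ht1.rpow_const (Or.inr h1θ.le)).mul (ht2.rpow_const (Or.inr hθ0.le))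
    rw [hval (V (k-1) ω)] at ht
    exact ge_of_tendsto ht (Filter.Eventually.of_forall hω)
  -- integrability helpers
  have hVexp_int : ∀ j, Integrable (fun ω => Real.exp (θ * V j ω)) ℙ := fun j => by
    refine Integrable.mono' (hV_int j)
      ((((hV_adapted j).mono (ℱ.le j)).measurable.const_mul θ).exp.aestronglyMeasurable)
      (Filter.Eventually.of_forall fun ω => ?_)
    rw [Real.norm_eq_abs, abs_of_nonneg (Real.exp_pos _).le]
    apply Real.exp_le_exp.mpr
    nlinarith [hV_nonneg j ω, mul_nonneg h1θ.le (hV_nonneg j ω)]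
  have hG_meas : ∀ j, Measurable fun ω => (∏ k ∈ Finset.Icc 1 j, Y k ω) ^ p := fun j =>
    (Finset.measurable_prod _ fun k _ => hYmeas k).pow measurable_const
  have hG_nn : ∀ j ω, 0 ≤ (∏ k ∈ Finset.Icc 1 j, Y k ω) ^ p := fun j ω =>
    Real.rpow_nonneg (Finset.prod_nonneg fun k _ => hY0 k ω) p
  have hG_bd : ∀ j ω, (∏ k ∈ Finset.Icc 1 j, Y k ω) ^ p ≤ ((M:ℝ) ^ j) ^ p := by
    intro j ω
    refine Real.rpow_le_rpow (Finset.prod_nonneg fun k _ => hY0 k ω) ?_ hp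
    calc ∏ k ∈ Finset.Icc 1 j, Y k ω ≤ ∏ k ∈ Finset.Icc 1 j, (M:ℝ) :=
          Finset.prod_le_prod (fun k _ => hY0 k ω) (fun k _ => hYM k ω)
      _ = (M:ℝ) ^ (Finset.Icc 1 j).card := Finset.prod_const _
      _ = (M:ℝ) ^ j := by rw [Nat.card_Icc]; norm_num
  have main : ∀ j : ℕ,
      ∫ ω, (∏ k ∈ Finset.Icc 1 j, Y k ω) ^ p * Real.exp (θ * V j ω) ∂ℙ ≤
        Real.exp (θ * v₀ + j * (p * C_T)) := by
    intro j
    induction j with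
    | zero =>
      have h0 : ∫ ω, (∏ k ∈ Finset.Icc 1 0, Y k ω) ^ p * Real.exp (θ * V 0 ω) ∂ℙ
          = ∫ _ω, Real.exp (θ * v₀) ∂ℙ := by
        apply integral_congr_ae
        filter_upwards [hV0] with ω h
        rw [h, Finset.Icc_eq_empty (by omega), Finset.prod_empty, Real.one_rpow, one_mul]
      rw [h0, integral_const]
      simp [measure_univ]
    | succ j ih =>
      have hk1 : (1:ℕ) ≤ j + 1 := Nat.le_add_left 1 j
      have hkey := key (j+1) hk1
      simp only [Nat.add_sub_cancel] at hkey
      set G : Ω → ℝ := fun ω => (∏ k ∈ Finset.Icc 1 j, Y k ω) ^ p with hGdef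
      set Z : Ω → ℝ := fun ω => Y (j+1) ω ^ p * Real.exp (θ * V (j+1) ω) with hZdef
      have hGsm : StronglyMeasurable[ℱ j] G := by
        refine Measurable.stronglyMeasurable (Measurable.pow ?_ measurable_const)
        refine Finset.measurable_prod _ fun k hkmem => ?_
        have hkj : k ≤ j := (Finset.mem_Icc.mp hkmem).2
        exact ((hX_adapted k).measurable.min measurable_const).mono (ℱ.mono hkj) le_rfl
      have hGm : Measurable G := (hGsm.mono (ℱ.le j)).measurable
      have hZ_meas : Measurable Z :=
        ((hYmeas (j+1)).pow measurable_const).mul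
          ((((hV_adapted (j+1)).mono (ℱ.le _)).measurable.const_mul θ).exp)
      have hZ_nn : ∀ ω, 0 ≤ Z ω := fun ω =>
        mul_nonneg (Real.rpow_nonneg (hY0 _ ω) p) (Real.exp_pos _).le
      have hZ_int : Integrable Z ℙ := by
        refine Integrable.mono' (g := fun ω => ((M:ℝ)^p) * Real.exp (θ * V (j+1) ω))
          ((hVexp_int (j+1)).const_mul _) hZ_meas.aestronglyMeasurable
          (Filter.Eventually.of_forall fun ω => ?_)
        rw [Real.norm_eq_abs, abs_of_nonneg (hZ_nn ω)]
        exact mul_le_mul_of_nonneg_right (Real.rpow_le_rpow (hY0 _ ω) (hYM _ ω) hp)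
          (Real.exp_pos _).le
      have hGZ_int : Integrable (fun ω => G ω * Z ω) ℙ := by
        refine Integrable.mono' (g := fun ω => (((M:ℝ)^j)^p) * Z ω) (hZ_int.const_mul _)
          (hGm.mul hZ_meas).aestronglyMeasurable (Filter.Eventually.of_forall fun ω => ?_)
        rw [Real.norm_eq_abs, abs_of_nonneg (mul_nonneg (hG_nn j ω) (hZ_nn ω))]
        exact mul_le_mul_of_nonneg_right (hG_bd j ω) (hZ_nn ω)
      have hsplit : (fun ω => (∏ k ∈ Finset.Icc 1 (j+1), Y k ω) ^ p *
          Real.exp (θ * V (j+1) ω)) = fun ω => G ω * Z ω := by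
        funext ω
        rw [Finset.prod_Icc_succ_top hk1,
          Real.mul_rpow (Finset.prod_nonneg fun k _ => hY0 k ω) (hY0 _ ω)]
        simp only [hGdef, hZdef]
        ring
      rw [hsplit, ← integral_condExp (μ := ℙ) (f := fun ω => G ω * Z ω) (ℱ.le j)]
      have e2 : ℙ[fun ω => G ω * Z ω|ℱ j] =ᵐ[ℙ] fun ω => G ω * (ℙ[Z|ℱ j]) ω := by
        have h := condExp_mul_of_stronglyMeasurable_left hGsm hGZ_int hZ_int
        filter_upwards [h] with ω hω
        exact hω
      have int1 : Integrable (fun ω => G ω * (ℙ[Z|ℱ j]) ω) ℙ := by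
        refine Integrable.mono' (g := fun ω => ((M:ℝ)^j)^p * ‖(ℙ[Z|ℱ j]) ω‖)
          (integrable_condExp.norm.const_mul _)
          (hGm.aestronglyMeasurable.mul
            (stronglyMeasurable_condExp.mono (ℱ.le j)).aestronglyMeasurable)
          (Filter.Eventually.of_forall fun ω => ?_)
        rw [norm_mul]
        refine mul_le_mul_of_nonneg_right ?_ (norm_nonneg _)
        rw [Real.norm_eq_abs, abs_of_nonneg (hG_nn j ω)]
        exact hG_bd j ω
      have int2 : Integrable (fun ω => G ω * Real.exp (θ * V j ω + p * C_T)) ℙ := by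
        refine Integrable.mono' (g := fun ω => (((M:ℝ)^j)^p * Real.exp (p * C_T)) *
            Real.exp (θ * V j ω)) ((hVexp_int j).const_mul _)
          ((hGm.mul ((((hV_adapted j).mono (ℱ.le j)).measurable.const_mul θ).add
            measurable_const).exp).aestronglyMeasurable)
          (Filter.Eventually.of_forall fun ω => ?_)
        rw [Real.norm_eq_abs, abs_of_nonneg (mul_nonneg (hG_nn j ω) (Real.exp_pos _).le),
          Real.exp_add]
        calc G ω * (Real.exp (θ * V j ω) * Real.exp (p * C_T))
            ≤ ((M:ℝ)^j)^p * (Real.exp (θ * V j ω) * Real.exp (p * C_T)) :=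
              mul_le_mul_of_nonneg_right (hG_bd j ω)
                (mul_nonneg (Real.exp_pos _).le (Real.exp_pos _).le)
          _ = (((M:ℝ)^j)^p * Real.exp (p * C_T)) * Real.exp (θ * V j ω) := by ring
      calc ∫ ω, (ℙ[fun ω => G ω * Z ω|ℱ j]) ω ∂ℙ
          = ∫ ω, G ω * (ℙ[Z|ℱ j]) ω ∂ℙ := integral_congr_ae e2
        _ ≤ ∫ ω, G ω * Real.exp (θ * V j ω + p * C_T) ∂ℙ := by
            refine integral_mono_ae int1 int2 ?_
            filter_upwards [hkey] with ω h
            exact mul_le_mul_of_nonneg_left h (hG_nn j ω)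
        _ = ∫ ω, (G ω * Real.exp (θ * V j ω)) * Real.exp (p * C_T) ∂ℙ :=
            integral_congr_ae (Filter.Eventually.of_forall fun ω => by
              simp only [Real.exp_add]; ring)
        _ = (∫ ω, G ω * Real.exp (θ * V j ω) ∂ℙ) * Real.exp (p * C_T) :=
            integral_mul_const _ _
        _ ≤ Real.exp (θ * v₀ + j * (p * C_T)) * Real.exp (p * C_T) :=
            mul_le_mul_of_nonneg_right ih (Real.exp_pos _).le
        _ = Real.exp (θ * v₀ + (j+1 : ℕ) * (p * C_T)) := by
            rw [← Real.exp_add]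
            congr 1
            push_cast
            ring
  have hGn_int : Integrable (fun ω => (∏ k ∈ Finset.Icc 1 n, Y k ω) ^ p) ℙ := by
    refine Stmt6Aux.int_of_bdd ((hG_meas n).aestronglyMeasurable) (C := ((M:ℝ)^n)^p)
      fun ω => ?_
    rw [Real.norm_eq_abs, abs_of_nonneg (hG_nn n ω)]
    exact hG_bd n ω
  have hGnE_int : Integrable
      (fun ω => (∏ k ∈ Finset.Icc 1 n, Y k ω) ^ p * Real.exp (θ * V n ω)) ℙ := by
    refine Integrable.mono' (g := fun ω => ((M:ℝ)^n)^p * Real.exp (θ * V n ω))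
      ((hVexp_int n).const_mul _)
      ((hG_meas n).mul (((hV_adapted n).mono (ℱ.le n)).measurable.const_mul θ).exp
        |>.aestronglyMeasurable)
      (Filter.Eventually.of_forall fun ω => ?_)
    rw [Real.norm_eq_abs, abs_of_nonneg (mul_nonneg (hG_nn n ω) (Real.exp_pos _).le)]
    exact mul_le_mul_of_nonneg_right (hG_bd n ω) (Real.exp_pos _).le
  calc ∫⁻ ω, ENNReal.ofReal ((∏ k ∈ Finset.Icc 1 n, Y k ω) ^ p) ∂ℙ
      = ENNReal.ofReal (∫ ω, (∏ k ∈ Finset.Icc 1 n, Y k ω) ^ p ∂ℙ) :=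
        (ofReal_integral_eq_lintegral_ofReal hGn_int
          (Filter.Eventually.of_forall fun ω => hG_nn n ω)).symm
    _ ≤ ENNReal.ofReal (∫ ω, (∏ k ∈ Finset.Icc 1 n, Y k ω) ^ p *
          Real.exp (θ * V n ω) ∂ℙ) := by
        refine ENNReal.ofReal_le_ofReal (integral_mono_ae hGn_int hGnE_int
          (Filter.Eventually.of_forall fun ω => ?_))
        refine le_mul_of_one_le_right (hG_nn n ω) ?_
        simpa using Real.exp_le_exp.mpr (mul_nonneg hθ0.le (hV_nonneg n ω))
    _ ≤ ENNReal.ofReal (Real.exp (θ * v₀ + n * (p * C_T))) :=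
        ENNReal.ofReal_le_ofReal (main n)
    _ = ENNReal.ofReal (Real.exp (p * κ * v₀ + p * C_T * n)) := by
        congr 1
        rw [hθdef]
        ring
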